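/- Let S be a finite full* immersed tree in ℂ with vertex positions v₁,…,v_{n+t}, where v₁,…,v_n are the vertices of degree at most 2 and the other t vertices are branching points at which the sum of outgoing unit edge directions is zero. For each k ≤ n let c_k be the unit complex number such that the sum of outgoing unit directions at v_k equals −c_k. Then the total length Σ_{(k,j)∈E} |v_k − v_j| equals Σ_{k=1}^n Re(conj(c_k) · v_k) = Σ_{k=1}^n conj(c_k) v_k (the latter sum being real). -/

import Mathlib

open scoped BigOperators

open Finset

lemma key_unit (z : ℂ) (hz : z ≠ 0) :
    (starRingEnd ℂ) (z / (‖z‖ : ℂ)) * z = (‖z‖ : ℂ) := by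
  have habs : (‖z‖ : ℂ) ≠ 0 := by
    simpa using hz
  rw [map_div₀, Complex.conj_ofReal, div_mul_eq_mul_div, mul_comm, Complex.mul_conj',
    sq]
  push_cast
  field_simp

/-- Maxwell-type length formula for a full* immersed graph in `ℂ`:
if at every non-terminal vertex the outgoing unit directions sum to `0`,
and at every terminal vertex `k` they sum to `-c k` with `|c k| = 1`, then
the total length equals `∑ₖ Re(conj (c k) * pos k)` and this sum is real. -/
theorem stmt_10 {V : Type*} [Fintype V] [DecidableEq V]
    (G : SimpleGraph V) [DecidableRel G.Adj] (pos : V → ℂ)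
    (T : Finset V) (c : V → ℂ)
    (hnd : ∀ v w : V, G.Adj v w → pos v ≠ pos w)
    (hdeg : ∀ k ∈ T, G.degree k ≤ 2)
    (hc : ∀ k ∈ T, ‖c k‖ = 1)
    (hterm : ∀ k ∈ T,
      ∑ w ∈ G.neighborFinset k, (pos w - pos k) / (‖pos w - pos k‖ : ℂ)
        = -c k)
    (hbranch : ∀ v : V, v ∉ T →
      ∑ w ∈ G.neighborFinset v, (pos w - pos v) / (‖pos w - pos v‖ : ℂ)
        = 0) :
    (∑ e ∈ G.edgeFinset,
        Sym2.lift ⟨fun v w => dist (pos v) (pos w), fun _ _ => dist_comm _ _⟩ e)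
      = (∑ k ∈ T, (starRingEnd ℂ) (c k) * pos k).re ∧
    (∑ k ∈ T, (starRingEnd ℂ) (c k) * pos k).im = 0 := by
  classical
  set u : V → V → ℂ := fun v w => (pos w - pos v) / (‖pos w - pos v‖ : ℂ) with hu
  set f : V → V → ℂ := fun v w => -((starRingEnd ℂ) (u v w) * pos v) with hf
  -- Step 1: vertex-wise sum equals the terminal sum
  have step1 : ∑ v : V, ∑ w ∈ G.neighborFinset v, f v w
      = ∑ k ∈ T, (starRingEnd ℂ) (c k) * pos k := by
    have hv : ∀ v : V, ∑ w ∈ G.neighborFinset v, f v w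
        = -((starRingEnd ℂ) (∑ w ∈ G.neighborFinset v, u v w) * pos v) := by
      intro v
      simp [hf, Finset.sum_neg_distrib, ← Finset.sum_mul, map_sum]
    rw [← Finset.sum_subset (Finset.subset_univ T)]
    · apply Finset.sum_congr rfl
      intro k hk
      rw [hv k, hterm k hk]
      simp
    · intro v _ hvT
      rw [hv v, hbranch v hvT]
      simp
  -- Step 2: vertex-wise sum equals dart sum
  have step2 : ∑ d : G.Dart, f d.fst d.snd
      = ∑ v : V, ∑ w ∈ G.neighborFinset v, f v w := by
    let e : (Σ v : V, G.neighborSet v) ≃ G.Dart :=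
      { toFun := fun s => ⟨(s.fst, s.snd), s.snd.property⟩
        invFun := fun d => ⟨d.fst, d.snd, d.adj⟩
        left_inv := fun s => by ext <;> simp
        right_inv := fun d => by ext <;> simp }
    rw [← Equiv.sum_comp e (fun d => f d.fst d.snd)]
    rw [← Finset.univ_sigma_univ, Finset.sum_sigma]
    apply Finset.sum_congr rfl
    intro v _
    rw [← Finset.sum_coe_sort (G.neighborFinset v) (fun w => f v w)]
    apply Finset.sum_nbij'
      (fun (a : G.neighborSet v) => (⟨a.1, (G.mem_neighborFinset v a.1).mpr a.2⟩ : (G.neighborFinset v : Finset V)))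
      (fun (a : (G.neighborFinset v : Finset V)) => (⟨a.1, (G.mem_neighborFinset v a.1).mp a.2⟩ : G.neighborSet v)) <;>
      simp [e]
  -- Step 3: dart sum equals the edge length sum
  have step3 : ∑ d : G.Dart, f d.fst d.snd
      = ((∑ e ∈ G.edgeFinset,
          Sym2.lift ⟨fun v w => dist (pos v) (pos w), fun _ _ => dist_comm _ _⟩ e : ℝ) : ℂ) := by
    push_cast
    have hmaps : ∀ d : G.Dart, d ∈ (Finset.univ : Finset G.Dart) → d.edge ∈ G.edgeFinset :=
      fun d _ => by rw [SimpleGraph.mem_edgeFinset]; exact d.edge_mem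
    rw [← Finset.sum_fiberwise_of_maps_to hmaps (fun d => f d.fst d.snd)]
    apply Finset.sum_congr rfl
    intro ed hed
    rw [SimpleGraph.mem_edgeFinset] at hed
    induction ed with
    | _ v w =>
      have hadj : G.Adj v w := hed
      let d : G.Dart := ⟨(v, w), hadj⟩
      have hde : d.edge = s(v, w) := rfl
      have hfib : (Finset.univ.filter fun d' : G.Dart => d'.edge = s(v, w)) = {d, d.symm} := by
        rw [← hde]; exact d.edge_fiber
      rw [hfib]
      have hne : d ≠ d.symm := d.symm_ne.symm
      rw [Finset.sum_pair hne]
      have hz : pos w - pos v ≠ 0 := sub_ne_zero.mpr (Ne.symm (hnd v w hadj))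
      have hz' : pos v - pos w ≠ 0 := sub_ne_zero.mpr (hnd v w hadj)
      have huswap : u w v = -u v w := by
        simp only [hu]
        rw [norm_sub_rev, show pos v - pos w = -(pos w - pos v) by ring, neg_div]
      have : f v w + f w v = (‖pos w - pos v‖ : ℂ) := by
        have hk := key_unit (pos w - pos v) hz
        simp only [hf, huswap, map_neg, neg_mul, neg_neg]
        calc -((starRingEnd ℂ) (u v w) * pos v) + (starRingEnd ℂ) (u v w) * pos w
            = (starRingEnd ℂ) (u v w) * (pos w - pos v) := by ring
          _ = (‖pos w - pos v‖ : ℂ) := hk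
      show f v w + f w v = _
      rw [this, Sym2.lift_mk]
      show ((‖pos w - pos v‖ : ℝ) : ℂ) = ((dist (pos v) (pos w) : ℝ) : ℂ)
      rw [Complex.dist_eq, norm_sub_rev]
  have main : ((∑ e ∈ G.edgeFinset,
      Sym2.lift ⟨fun v w => dist (pos v) (pos w), fun _ _ => dist_comm _ _⟩ e : ℝ) : ℂ)
      = ∑ k ∈ T, (starRingEnd ℂ) (c k) * pos k := by
    rw [← step3, step2, step1]
  constructor
  · rw [← main]; simp
  · rw [← main]; simp
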